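/- Let s : ℕ∞ → ℕ∞ be defined by the system s(n) = min(c, s₁(n)) where c ∈ ℕ∞ and s₁ satisfies equations derived from the rules b₁(n) = if n < 2 then 0 else 1 + b₃(n−1), b₂(n) = 1 + b₁(n+1), b₃(n) = 1 + b₂(n+1), s₁(n) = if n < 1 then 0 else 1 + min(b₁(n−1), b₂(n−1), b₃(n−1)). Then the unique continuous solution satisfies: b₃(n) = ∞ for all n, b₂(0) = 1 and b₂(n) = ∞ for n ≥ 1, b₁(n) = 0 for n ≤ 1 and b₁(n) = ∞ for n ≥ 2, hence s₁(0) = 0, s₁(1) = s₁(2) = 1, and s₁(n) = ∞ for n ≥ 3. -/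

import Mathlib

open scoped Classical

/-- Production of a finite io-word (`true` = '+' output, `false` = '−' input)
on a finite input budget. -/
def prodList : List Bool → ℕ → ℕ
  | [], _ => 0
  | true :: l, n => 1 + prodList l n
  | false :: _, 0 => 0
  | false :: l, n + 1 => prodList l n

/-- The production function ⟦σ⟧ : ℕ∞ → ℕ∞ of an io-sequence σ (a finite or
infinite word over {−,+}), obtained as the supremum over finite prefixes of σ
and finite budgets below the argument. -/
noncomputable def prodSeq (σ : Stream'.Seq Bool) (n : ℕ∞) : ℕ∞ :=
  ⨆ (k : ℕ) (m : ℕ) (_ : (m : ℕ∞) ≤ n), (prodList (σ.take k) m : ℕ∞)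

/-- ω-continuity (together with monotonicity) on the ω-cpo ℕ∞. -/
def NEContinuous (f : ℕ∞ → ℕ∞) : Prop :=
  Monotone f ∧ ∀ c : ℕ → ℕ∞, Monotone c → f (⨆ k, c k) = ⨆ k, f (c k)

/-- Rational (eventually periodic, possibly finite) io-sequences. -/
def RationalSeq (σ : Stream'.Seq Bool) : Prop :=
  (∃ l : List Bool, σ = Stream'.Seq.ofList l) ∨
  ∃ (u v : List Bool) (h : v ≠ []),
    σ = (Stream'.Seq.ofList u).append (Stream'.Seq.ofStream (Stream'.cycle v h))

/-- Periodically increasing functions on ℕ∞: monotone, ω-continuous,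
determined at ∞ by the finite values, and eventually linear-periodic. -/
def PerInc (f : ℕ∞ → ℕ∞) : Prop :=
  Monotone f ∧
  (∀ c : ℕ → ℕ∞, Monotone c → f (⨆ k, c k) = ⨆ k, f (c k)) ∧
  (f ⊤ = ⨆ n : ℕ, f n) ∧
  ∃ N p q : ℕ, 1 ≤ p ∧ ∀ n : ℕ, N ≤ n → f ((n : ℕ∞) + (p : ℕ∞)) = f n + (q : ℕ∞)

lemma enat_top_of_forall (a : ℕ∞) (h : ∀ k:ℕ, (k:ℕ∞) ≤ a) : a = ⊤ := by
  cases a with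
  | top => rfl
  | coe n => exact absurd (h (n+1)) (by exact_mod_cast by omega)

/-- The values of the unique continuous solution of the production equation
system of the pure stream specification
f(x:σ) → x : b(σ,σ,σ), b(x:y:σ, τ, υ) → x : b(y:τ, y:υ, y:σ). -/
theorem pure_example_solution_values (c : ℕ∞) (s s₁ b₁ b₂ b₃ : ℕ∞ → ℕ∞)
    (hsc : NEContinuous s) (hs₁c : NEContinuous s₁)
    (hb₁c : NEContinuous b₁) (hb₂c : NEContinuous b₂) (hb₃c : NEContinuous b₃)
    (hb₁ : ∀ n : ℕ∞, b₁ n = if n < 2 then 0 else 1 + b₃ (n - 1))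
    (hb₂ : ∀ n : ℕ∞, b₂ n = 1 + b₁ (n + 1))
    (hb₃ : ∀ n : ℕ∞, b₃ n = 1 + b₂ (n + 1))
    (hs₁ : ∀ n : ℕ∞,
      s₁ n = if n < 1 then 0
             else 1 + min (b₁ (n - 1)) (min (b₂ (n - 1)) (b₃ (n - 1))))
    (hs : ∀ n : ℕ∞, s n = min c (s₁ n)) :
    (∀ n : ℕ∞, b₃ n = ⊤) ∧
    b₂ 0 = 1 ∧ (∀ n : ℕ∞, 1 ≤ n → b₂ n = ⊤) ∧
    (∀ n : ℕ∞, n ≤ 1 → b₁ n = 0) ∧ (∀ n : ℕ∞, 2 ≤ n → b₁ n = ⊤) ∧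
    s₁ 0 = 0 ∧ s₁ 1 = 1 ∧ s₁ 2 = 1 ∧ (∀ n : ℕ∞, 3 ≤ n → s₁ n = ⊤) := by
  -- step equation
  have step : ∀ n : ℕ∞, 2 ≤ n → b₁ n = 3 + b₁ (n + 1) := by
    intro n hn
    have h1 : (1:ℕ∞) ≤ n := le_trans (by norm_num) hn
    rw [hb₁ n, if_neg (not_lt.2 hn), hb₃, tsub_add_cancel_of_le h1, hb₂]
    rw [← add_assoc, ← add_assoc]
    norm_num
  have low : ∀ k : ℕ, ∀ n : ℕ∞, 2 ≤ n → (3*k : ℕ∞) ≤ b₁ n := by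
    intro k
    induction k with
    | zero => intro n hn; simp
    | succ k ih =>
      intro n hn
      have hn1 : (2:ℕ∞) ≤ n + 1 := le_trans hn (le_self_add)
      rw [step n hn]
      calc (3*(k+1:ℕ) : ℕ∞) = 3 + 3*k := by push_cast; ring
        _ ≤ 3 + b₁ (n+1) := add_le_add_right (ih (n+1) hn1) 3
  have hB1top : ∀ n : ℕ∞, 2 ≤ n → b₁ n = ⊤ := by
    intro n hn
    refine enat_top_of_forall _ (fun k => le_trans ?_ (low k n hn))
    exact_mod_cast Nat.le_mul_of_pos_left k (by norm_num)
  have hB1low : ∀ n : ℕ∞, n ≤ 1 → b₁ n = 0 := by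
    intro n hn
    rw [hb₁ n, if_pos (lt_of_le_of_lt hn (by norm_num))]
  have hB2top : ∀ n : ℕ∞, 1 ≤ n → b₂ n = ⊤ := by
    intro n hn
    rw [hb₂ n, hB1top (n+1) (by calc (2:ℕ∞) = 1 + 1 := by norm_num
      _ ≤ n + 1 := add_le_add_left hn 1)]
    simp
  have hB3top : ∀ n : ℕ∞, b₃ n = ⊤ := by
    intro n
    rw [hb₃ n, hB2top (n+1) (le_add_self)]
    simp
  have hB20 : b₂ 0 = 1 := by
    rw [hb₂ 0]
    have : (0:ℕ∞) + 1 = 1 := by simp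
    rw [this, hB1low 1 le_rfl]; simp
  refine ⟨hB3top, hB20, hB2top, hB1low, hB1top, ?_, ?_, ?_, ?_⟩
  · rw [hs₁ 0, if_pos (by norm_num)]
  · rw [hs₁ 1, if_neg (by norm_num)]
    have : (1:ℕ∞) - 1 = 0 := by simp
    rw [this, hB1low 0 zero_le]
    simp
  · rw [hs₁ 2, if_neg (by norm_num)]
    have : (2:ℕ∞) - 1 = 1 := by decide
    rw [this, hB1low 1 le_rfl]
    simp
  · intro n hn
    have h1 : (1:ℕ∞) ≤ n := le_trans (by norm_num) hn
    have h2 : (2:ℕ∞) ≤ n - 1 := by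
      cases n with
      | top => simp
      | coe m =>
        have hm : 3 ≤ m := by exact_mod_cast hn
        rw [show ((m:ℕ∞) - 1) = ((m-1 : ℕ) : ℕ∞) from (ENat.coe_sub m 1).symm]
        exact_mod_cast by omega
    rw [hs₁ n, if_neg (not_lt.2 h1), hB1top _ h2, hB2top _ (le_trans (by norm_num) h2),
      hB3top]
    simp
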